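/- Let t ∈ [0,1) and suppose there exists a design measure on the design points x_1, …, x_n ∈ ℝ^q whose matrix H is invertible. A design measure p is D-optimal (i.e., det H(p) ≥ det H(p') for every design measure p' with H(p') invertible) if and only if H(p) is invertible and ψ_{Di}(p) ≤ q for every i with 1 ≤ i ≤ n. -/

import Mathlib

open Matrix BigOperators Finset

noncomputable section

/-- A design measure: nonnegative masses summing to 1. -/
def designMeasure {n : ℕ} (p : Fin n → ℝ) : Prop :=
  (∀ i, 0 ≤ p i) ∧ ∑ i, p i = 1

/-- G(p) = Σ pᵢ xᵢ xᵢᵀ. -/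
def Gmat {q n : ℕ} (x : Fin n → Fin q → ℝ) (p : Fin n → ℝ) : Matrix (Fin q) (Fin q) ℝ :=
  ∑ i, p i • Matrix.vecMulVec (x i) (x i)

/-- g(p) = Σ pᵢ xᵢ. -/
def gvec {q n : ℕ} (x : Fin n → Fin q → ℝ) (p : Fin n → ℝ) : Fin q → ℝ :=
  ∑ i, p i • x i

/-- H(p) = G(p) − t g(p) g(p)ᵀ. -/
def Hmat {q n : ℕ} (t : ℝ) (x : Fin n → Fin q → ℝ) (p : Fin n → ℝ) : Matrix (Fin q) (Fin q) ℝ :=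
  Gmat x p - t • Matrix.vecMulVec (gvec x p) (gvec x p)

/-- ψ_{Di}(p). -/
def psiD {q n : ℕ} (t : ℝ) (x : Fin n → Fin q → ℝ) (p : Fin n → ℝ) (i : Fin n) : ℝ :=
  (1 - t) * (x i ⬝ᵥ ((Hmat t x p)⁻¹ *ᵥ x i))
    + t * ((x i - gvec x p) ⬝ᵥ ((Hmat t x p)⁻¹ *ᵥ (x i - gvec x p)))

/-- ψ_{Ai}(p). -/
def psiA {q n : ℕ} (t : ℝ) (x : Fin n → Fin q → ℝ) (p : Fin n → ℝ) (i : Fin n) : ℝ :=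
  (1 - t) * (x i ⬝ᵥ (((Hmat t x p)⁻¹ * (Hmat t x p)⁻¹) *ᵥ x i))
    + t * ((x i - gvec x p) ⬝ᵥ (((Hmat t x p)⁻¹ * (Hmat t x p)⁻¹) *ᵥ (x i - gvec x p)))

end

noncomputable section

section Helpers

variable {q n : ℕ}

lemma gvec_apply' (x : Fin n → Fin q → ℝ) (p : Fin n → ℝ) (a : Fin q) :
    (∑ i, p i • x i : Fin q → ℝ) a = ∑ j, p j * x j a := by
  simp [Finset.sum_apply]

lemma trace_mul_vecMulVec (A : Matrix (Fin q) (Fin q) ℝ) (u v : Fin q → ℝ) :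
    Matrix.trace (A * Matrix.vecMulVec u v) = v ⬝ᵥ A *ᵥ u := by
  simp only [Matrix.trace, Matrix.diag, Matrix.mul_apply, Matrix.vecMulVec_apply,
    dotProduct, Matrix.mulVec, dotProduct]
  congr 1; ext j
  rw [Finset.mul_sum]
  congr 1; ext k
  ring

lemma posSemidef_vecMulVec (v : Fin q → ℝ) : (Matrix.vecMulVec v v).PosSemidef := by
  rw [Matrix.posSemidef_iff_dotProduct_mulVec]
  constructor
  · ext a b; simp [Matrix.vecMulVec_apply, Matrix.conjTranspose_apply, mul_comm]
  · intro y
    have : (Matrix.vecMulVec v v) *ᵥ y = (v ⬝ᵥ y) • v := by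
      ext a
      simp only [Matrix.mulVec, Matrix.vecMulVec_apply, dotProduct, Pi.smul_apply,
        smul_eq_mul, Finset.mul_sum]
      rw [Finset.sum_mul]
      apply Finset.sum_congr rfl; intro k _; ring
    rw [this]
    simp only [star_trivial, dotProduct_smul]
    
    have : v ⬝ᵥ y = y ⬝ᵥ v := dotProduct_comm v y
    rw [this]
    exact mul_self_nonneg _

lemma posSemidef_smul' {M : Matrix (Fin q) (Fin q) ℝ} (hM : M.PosSemidef) {c : ℝ} (hc : 0 ≤ c) :
    (c • M).PosSemidef := by
  rw [Matrix.posSemidef_iff_dotProduct_mulVec]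
  constructor
  · have := hM.1
    unfold Matrix.IsHermitian at *
    rw [Matrix.conjTranspose_smul, this]
    simp [star_trivial]
  · intro y
    simp only [Matrix.smul_mulVec, dotProduct_smul, smul_eq_mul]
    exact mul_nonneg hc (hM.dotProduct_mulVec_nonneg y)

end Helpers


section Main
variable {q n : ℕ}

/-- K_i matrices -/
def Kmat (t : ℝ) (x : Fin n → Fin q → ℝ) (p : Fin n → ℝ) (i : Fin n) : Matrix (Fin q) (Fin q) ℝ :=
  (1 - t) • Matrix.vecMulVec (x i) (x i)
    + t • Matrix.vecMulVec (x i - gvec x p) (x i - gvec x p)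

lemma gvec_apply (x : Fin n → Fin q → ℝ) (p : Fin n → ℝ) (a : Fin q) :
    gvec x p a = ∑ j, p j * x j a := by
  simp [gvec, Finset.sum_apply]

lemma key_identity (t : ℝ) (x : Fin n → Fin q → ℝ) (p p' : Fin n → ℝ)
    (h1 : ∑ j, p' j = 1) :
    Hmat t x p' = (∑ j, p' j • Kmat t x p j)
      - t • Matrix.vecMulVec (gvec x p' - gvec x p) (gvec x p' - gvec x p) := by
  ext a b
  have ha : ∑ j, p' j * x j a = gvec x p' a := (gvec_apply x p' a).symm
  have hb : ∑ j, p' j * x j b = gvec x p' b := (gvec_apply x p' b).symm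
  simp only [Hmat, Gmat, Kmat, Matrix.sub_apply, Matrix.add_apply, Matrix.smul_apply,
    Finset.sum_apply, Matrix.sum_apply, Matrix.vecMulVec_apply, smul_eq_mul, Pi.sub_apply]
  have expand : ∀ j, p' j * ((1 - t) * (x j a * x j b)
      + t * ((x j a - gvec x p a) * (x j b - gvec x p b)))
      = p' j * (x j a * x j b) - (t * gvec x p b) * (p' j * x j a)
        - (t * gvec x p a) * (p' j * x j b) + (t * (gvec x p a * gvec x p b)) * p' j := by
    intro j; ring
  rw [Finset.sum_congr rfl fun j _ => expand j]
  simp only [Finset.sum_add_distrib, Finset.sum_sub_distrib, ← Finset.mul_sum, ha, hb, h1]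
  ring


lemma vecMulVec_zero' : Matrix.vecMulVec (0 : Fin q → ℝ) (0 : Fin q → ℝ) = (0 : Matrix (Fin q) (Fin q) ℝ) := by
  ext a b; simp [Matrix.vecMulVec_apply]

lemma posSemidef_sum {m : ℕ} (f : Fin m → Matrix (Fin q) (Fin q) ℝ)
    (hf : ∀ i, (f i).PosSemidef) : (∑ i, f i).PosSemidef := by
  classical
  refine Finset.sum_induction f _ (fun a b ha hb => ha.add hb) ?_ (fun i _ => hf i)
  exact Matrix.PosSemidef.zero

lemma Kmat_posSemidef (t : ℝ) (x : Fin n → Fin q → ℝ) (p : Fin n → ℝ) (i : Fin n)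
    (ht0 : 0 ≤ t) (ht1 : t ≤ 1) : (Kmat t x p i).PosSemidef :=
  (posSemidef_smul' (posSemidef_vecMulVec _) (by linarith)).add
    (posSemidef_smul' (posSemidef_vecMulVec _) ht0)

lemma Hmat_eq_sum (t : ℝ) (x : Fin n → Fin q → ℝ) (p : Fin n → ℝ)
    (h1 : ∑ j, p j = 1) : Hmat t x p = ∑ j, p j • Kmat t x p j := by
  have := key_identity t x p p h1
  simpa [vecMulVec_zero'] using this

lemma Hmat_posSemidef (t : ℝ) (x : Fin n → Fin q → ℝ) (p : Fin n → ℝ)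
    (hp : designMeasure p) (ht0 : 0 ≤ t) (ht1 : t ≤ 1) : (Hmat t x p).PosSemidef := by
  rw [Hmat_eq_sum t x p hp.2]
  exact posSemidef_sum _ fun j =>
    posSemidef_smul' (Kmat_posSemidef t x p j ht0 ht1) (hp.1 j)

lemma psiD_eq_trace (t : ℝ) (x : Fin n → Fin q → ℝ) (p : Fin n → ℝ) (i : Fin n) :
    psiD t x p i = Matrix.trace ((Hmat t x p)⁻¹ * Kmat t x p i) := by
  simp only [Kmat, psiD, Matrix.mul_add, Matrix.trace_add, Matrix.mul_smul, Matrix.trace_smul,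
    trace_mul_vecMulVec, smul_eq_mul]

lemma pert_identity (t : ℝ) (x : Fin n → Fin q → ℝ) (p : Fin n → ℝ) (i : Fin n) (ε : ℝ)
    (h1 : ∑ j, p j = 1) :
    Hmat t x (fun j => (1 - ε) * p j + ε * (if j = i then 1 else 0))
      = (1 - ε) • Hmat t x p + ((ε * (1 - t)) • Matrix.vecMulVec (x i) (x i)
        + (t * ε * (1 - ε)) • Matrix.vecMulVec (x i - gvec x p) (x i - gvec x p)) := by
  have hga : ∀ a : Fin q, (∑ j, ((1 - ε) * p j + ε * (if j = i then 1 else 0)) * x j a)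
      = (1 - ε) * gvec x p a + ε * x i a := by
    intro a
    rw [gvec_apply]
    simp only [add_mul, Finset.sum_add_distrib, mul_assoc, ← Finset.mul_sum, ite_mul, one_mul,
      zero_mul, mul_ite, mul_zero, Finset.sum_ite_eq', Finset.mem_univ, if_true]
  have hG : ∀ a b : Fin q, (∑ j, ((1 - ε) * p j + ε * (if j = i then 1 else 0)) * (x j a * x j b))
      = (1 - ε) * (∑ j, p j * (x j a * x j b)) + ε * (x i a * x i b) := by
    intro a b
    simp only [add_mul, Finset.sum_add_distrib, mul_assoc, ← Finset.mul_sum, ite_mul, one_mul,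
      zero_mul, mul_ite, mul_zero, Finset.sum_ite_eq', Finset.mem_univ, if_true]
  ext a b
  simp only [Hmat, Gmat, Matrix.sub_apply, Matrix.add_apply, Matrix.smul_apply,
    Matrix.sum_apply, Matrix.vecMulVec_apply, smul_eq_mul, Pi.smul_apply, Pi.sub_apply,
    gvec_apply, hga, hG]
  ring


section Spectral
variable {A B : Matrix (Fin q) (Fin q) ℝ}

lemma trace_eq_sum_eig (hA : A.IsHermitian) : A.trace = ∑ i, hA.eigenvalues i := by
  have h1 : star (hA.eigenvectorUnitary : Matrix (Fin q) (Fin q) ℝ)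
      * (hA.eigenvectorUnitary : Matrix (Fin q) (Fin q) ℝ) = 1 :=
    Matrix.mem_unitaryGroup_iff'.mp (hA.eigenvectorUnitary).2
  conv_lhs => rw [hA.spectral_theorem, Unitary.conjStarAlgAut_apply]
  rw [Matrix.trace_mul_comm, ← Matrix.mul_assoc, h1, Matrix.one_mul]
  simp [Matrix.trace_diagonal]

lemma det_one_add_eig (hA : A.IsHermitian) :
    (1 + A).det = ∏ i, (1 + hA.eigenvalues i) := by
  have h2 : (hA.eigenvectorUnitary : Matrix (Fin q) (Fin q) ℝ)
      * star (hA.eigenvectorUnitary : Matrix (Fin q) (Fin q) ℝ) = 1 :=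
    Matrix.mem_unitaryGroup_iff.mp (hA.eigenvectorUnitary).2
  have key : (1 + A) = (hA.eigenvectorUnitary : Matrix (Fin q) (Fin q) ℝ)
      * (1 + Matrix.diagonal (RCLike.ofReal ∘ hA.eigenvalues))
      * star (hA.eigenvectorUnitary : Matrix (Fin q) (Fin q) ℝ) := by
    rw [Matrix.mul_add, Matrix.add_mul, Matrix.mul_one, h2]
    conv_lhs => rw [hA.spectral_theorem, Unitary.conjStarAlgAut_apply]
  rw [key, Matrix.det_mul, Matrix.det_mul]
  have : (hA.eigenvectorUnitary : Matrix (Fin q) (Fin q) ℝ).det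
      * (star (hA.eigenvectorUnitary : Matrix (Fin q) (Fin q) ℝ)).det = 1 := by
    rw [← Matrix.det_mul, h2, Matrix.det_one]
  rw [mul_right_comm, this, one_mul]
  have : (1 : Matrix (Fin q) (Fin q) ℝ) + Matrix.diagonal (RCLike.ofReal ∘ hA.eigenvalues)
      = Matrix.diagonal (fun i => 1 + hA.eigenvalues i) := by
    rw [← Matrix.diagonal_one, Matrix.diagonal_add]
    congr 1
  rw [this, Matrix.det_diagonal]

lemma posDef_of_psd_det_ne (hM : B.PosSemidef) (h : B.det ≠ 0) : B.PosDef := by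
  exact hM.posDef_iff_det_ne_zero.mpr h

lemma one_add_sum_le_prod' (f : Fin q → ℝ) (hf : ∀ i, 0 ≤ f i) :
    1 + ∑ i, f i ≤ ∏ i, (1 + f i) := by
  classical
  suffices H : ∀ s : Finset (Fin q), 1 + ∑ i ∈ s, f i ≤ ∏ i ∈ s, (1 + f i) from H Finset.univ
  intro s
  induction s using Finset.induction_on with
  | empty => simp
  | @insert a s ha ih =>
    rw [Finset.sum_insert ha, Finset.prod_insert ha]
    have hs : 0 ≤ ∑ i ∈ s, f i := Finset.sum_nonneg fun i _ => hf i
    nlinarith [ih, hf a, hs]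

lemma prod_le_one_of_sum_le (f : Fin q → ℝ) (hf : ∀ i, 0 ≤ f i) (hq : 1 ≤ q)
    (hs : ∑ i, f i ≤ q) : ∏ i, f i ≤ 1 := by
  have hq0 : (0:ℝ) < q := by exact_mod_cast hq
  have h := Real.geom_mean_le_arith_mean_weighted Finset.univ (fun _ => (q:ℝ)⁻¹) f
    (fun i _ => by positivity) (by simp [Finset.card_univ]; field_simp) (fun i _ => hf i)
  have hprod : ∏ i, f i ^ ((q:ℝ)⁻¹) = (∏ i, f i) ^ ((q:ℝ)⁻¹) :=
    Real.finset_prod_rpow Finset.univ f (fun i _ => hf i) _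
  rw [hprod] at h
  have hsum : ∑ i, (q:ℝ)⁻¹ * f i ≤ 1 := by
    rw [← Finset.mul_sum]
    rw [inv_mul_le_iff₀ hq0]
    simpa using hs
  by_contra hc
  push_neg at hc
  have : (1:ℝ) < (∏ i, f i) ^ ((q:ℝ)⁻¹) := by
    apply Real.one_lt_rpow_iff_of_pos (by linarith) |>.mpr
    exact Or.inl ⟨hc, by positivity⟩
  linarith


open scoped MatrixOrder in
lemma conj_exists (hA : A.PosDef) (hB : B.PosSemidef) :
    ∃ M : Matrix (Fin q) (Fin q) ℝ, M.PosSemidef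
      ∧ M.trace = (A⁻¹ * B).trace
      ∧ B.det = A.det * M.det
      ∧ (A + B).det = A.det * (1 + M).det := by
  set S := CFC.sqrt A with hSdef
  have hSS : S * S = A := CFC.sqrt_mul_sqrt_self A (Matrix.nonneg_iff_posSemidef.mpr hA.posSemidef)
  have hdetS : S.det * S.det = A.det := by rw [← Matrix.det_mul, hSS]
  have hdetSne : S.det ≠ 0 := by
    intro h0
    have := hA.det_pos
    rw [← hdetS, h0, mul_zero] at this
    exact lt_irrefl _ this
  have hSd : S.PosDef := posDef_of_psd_det_ne (Matrix.nonneg_iff_posSemidef.mp (CFC.sqrt_nonneg A)) hdetSne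
  have hSH : S⁻¹ᴴ = S⁻¹ := hSd.isHermitian.inv
  refine ⟨S⁻¹ * B * S⁻¹, ?_, ?_, ?_, ?_⟩
  · have := hB.mul_mul_conjTranspose_same S⁻¹
    rwa [hSH] at this
  · rw [Matrix.trace_mul_comm, ← Matrix.mul_assoc, ← Matrix.mul_inv_rev, hSS]
  · rw [Matrix.det_mul, Matrix.det_mul, Matrix.det_nonsing_inv, Ring.inverse_eq_inv', ← hdetS]
    field_simp
  · have hU : IsUnit S.det := Ne.isUnit hdetSne
    have key : A + B = S * (1 + S⁻¹ * B * S⁻¹) * S := by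
      rw [Matrix.mul_add, Matrix.add_mul, Matrix.mul_one, hSS]
      congr 1
      symm
      calc S * (S⁻¹ * B * S⁻¹) * S = (S * S⁻¹) * B * (S⁻¹ * S) := by
            simp only [Matrix.mul_assoc]
        _ = B := by rw [Matrix.mul_nonsing_inv _ hU, Matrix.nonsing_inv_mul _ hU,
            Matrix.one_mul, Matrix.mul_one]
    rw [key, Matrix.det_mul, Matrix.det_mul, ← hdetS]
    ring

lemma det_le_det_of_trace_le (hA : A.PosDef) (hB : B.PosSemidef) (hq : 1 ≤ q)
    (htr : (A⁻¹ * B).trace ≤ (q : ℝ)) : B.det ≤ A.det := by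
  obtain ⟨M, hM, htrM, hdet, -⟩ := conj_exists hA hB
  have hle : M.det ≤ 1 := by
    rw [hM.1.det_eq_prod_eigenvalues]
    push_cast
    apply prod_le_one_of_sum_le _ (fun i => hM.eigenvalues_nonneg i) hq
    rw [← trace_eq_sum_eig hM.1, htrM]
    exact htr
  calc B.det = A.det * M.det := hdet
    _ ≤ A.det * 1 := by
        apply mul_le_mul_of_nonneg_left hle hA.det_pos.le
    _ = A.det := mul_one _

lemma det_add_ge_trace (hA : A.PosDef) (hB : B.PosSemidef) :
    A.det * (1 + (A⁻¹ * B).trace) ≤ (A + B).det := by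
  obtain ⟨M, hM, htrM, -, hdet⟩ := conj_exists hA hB
  rw [hdet]
  apply mul_le_mul_of_nonneg_left _ hA.det_pos.le
  rw [det_one_add_eig hM.1, ← htrM, trace_eq_sum_eig hM.1]
  exact one_add_sum_le_prod' _ fun i => hM.eigenvalues_nonneg i


lemma posDef_smul' {M : Matrix (Fin q) (Fin q) ℝ} (hM : M.PosDef) {c : ℝ} (hc : 0 < c) :
    (c • M).PosDef := by
  rw [Matrix.posDef_iff_dotProduct_mulVec]
  constructor
  · have := hM.1
    unfold Matrix.IsHermitian at *
    rw [Matrix.conjTranspose_smul, this]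
    simp [star_trivial]
  · intro y hy
    simp only [Matrix.smul_mulVec, dotProduct_smul, smul_eq_mul]
    exact mul_pos hc (hM.dotProduct_mulVec_pos hy)

lemma smulMat_inv {c : ℝ} (hc : c ≠ 0) (hA : IsUnit A.det) : (c • A)⁻¹ = c⁻¹ • A⁻¹ := by
  apply Matrix.inv_eq_right_inv
  have : (c • A) * (c⁻¹ • A⁻¹) = (c * c⁻¹) • (A * A⁻¹) := by
    rw [Matrix.smul_mul, Matrix.mul_smul, smul_smul]
  rw [this, mul_inv_cancel₀ hc, one_smul, Matrix.mul_nonsing_inv _ hA]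

end Spectral

lemma trace_inv_mul (t : ℝ) (x : Fin n → Fin q → ℝ) (p p' : Fin n → ℝ)
    (h1' : ∑ j, p' j = 1) :
    ((Hmat t x p)⁻¹ * Hmat t x p').trace = (∑ j, p' j * psiD t x p j)
      - t * ((gvec x p' - gvec x p) ⬝ᵥ (Hmat t x p)⁻¹ *ᵥ (gvec x p' - gvec x p)) := by
  conv_lhs => rw [key_identity t x p p' h1']
  rw [Matrix.mul_sub, Matrix.trace_sub, Matrix.mul_smul, Matrix.trace_smul,
    trace_mul_vecMulVec, Matrix.mul_sum, Matrix.trace_sum]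
  congr 1
  · apply Finset.sum_congr rfl
    intro j _
    rw [Matrix.mul_smul, Matrix.trace_smul, psiD_eq_trace, smul_eq_mul]

end Main
end

theorem statement_5 {q n : ℕ} (hq : 1 ≤ q) (hn : 1 ≤ n)
    (x : Fin n → Fin q → ℝ) (t : ℝ) (ht0 : 0 ≤ t) (ht1 : t < 1)
    (hex : ∃ p0 : Fin n → ℝ, designMeasure p0 ∧ IsUnit (Hmat t x p0).det)
    (p : Fin n → ℝ) (hp : designMeasure p) :
    (∀ p' : Fin n → ℝ, designMeasure p' → IsUnit (Hmat t x p').det →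
        (Hmat t x p').det ≤ (Hmat t x p).det)
      ↔ (IsUnit (Hmat t x p).det ∧ ∀ i, psiD t x p i ≤ q) := by
  constructor
  · intro hopt
    obtain ⟨p0, hp0, hu0⟩ := hex
    have hpd0 : (Hmat t x p0).PosDef :=
      posDef_of_psd_det_ne (Hmat_posSemidef t x p0 hp0 ht0 ht1.le) hu0.ne_zero
    have hdetp : 0 < (Hmat t x p).det := lt_of_lt_of_le hpd0.det_pos (hopt p0 hp0 hu0)
    have hu : IsUnit (Hmat t x p).det := hdetp.ne'.isUnit
    refine ⟨hu, fun i => ?_⟩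
    by_contra hlt
    push_neg at hlt
    have hHpd : (Hmat t x p).PosDef :=
      posDef_of_psd_det_ne (Hmat_posSemidef t x p hp ht0 ht1.le) hu.ne_zero
    set H := Hmat t x p with hH
    set g := gvec x p with hg
    set w := x i - g with hw
    set a := x i ⬝ᵥ H⁻¹ *ᵥ x i with ha
    set b := w ⬝ᵥ H⁻¹ *ᵥ w with hb
    have hinvpsd : H⁻¹.PosSemidef := hHpd.inv.posSemidef
    have hb0 : 0 ≤ b := by simpa [star_trivial] using hinvpsd.dotProduct_mulVec_nonneg w
    have ha0 : 0 ≤ a := by simpa [star_trivial] using hinvpsd.dotProduct_mulVec_nonneg (x i)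
    set ψ := psiD t x p i with hψ
    have hψab : ψ = (1 - t) * a + t * b := by
      rw [hψ]
      unfold psiD
      rw [← hH, ← hg, ← hw, ← ha, ← hb]
    have hqR : (1:ℝ) ≤ q := by exact_mod_cast hq
    set C := t * b + ((q:ℝ) - 1) * (ψ - 1) with hC
    have hC0 : 0 ≤ C := by
      have : 0 ≤ t * b := mul_nonneg ht0 hb0
      nlinarith
    set ε := min (1/2 : ℝ) ((ψ - q)/(2*C+1)) with hε
    have hε0 : 0 < ε := lt_min (by norm_num) (div_pos (by linarith) (by linarith))
    have hεhalf : ε ≤ 1/2 := min_le_left _ _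
    have hεC : ε * (2*C+1) ≤ ψ - q := by
      have h2 : ε ≤ (ψ - q)/(2*C+1) := min_le_right _ _
      calc ε * (2*C+1) ≤ ((ψ - q)/(2*C+1)) * (2*C+1) :=
            mul_le_mul_of_nonneg_right h2 (by linarith)
        _ = ψ - q := div_mul_cancel₀ _ (by linarith)
    clear_value a b ψ C ε
    have h1e : (0:ℝ) < 1 - ε := by linarith
    set pe := fun j => (1 - ε) * p j + ε * (if j = i then 1 else 0) with hpe
    have hpedm : designMeasure pe := by
      constructor
      · intro j
        apply add_nonneg (mul_nonneg h1e.le (hp.1 j))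
        apply mul_nonneg hε0.le
        split <;> norm_num
      · rw [hpe]
        simp only [Finset.sum_add_distrib, ← Finset.mul_sum, hp.2,
          Finset.sum_ite_eq', Finset.mem_univ, if_true]
        ring
    set B := (1 - ε) • H with hB2
    set A2 := (ε * (1 - t)) • Matrix.vecMulVec (x i) (x i)
      + (t * ε * (1 - ε)) • Matrix.vecMulVec w w with hA2
    have hpert : Hmat t x pe = B + A2 := pert_identity t x p i ε hp.2
    have hBpd : B.PosDef := posDef_smul' hHpd h1e
    have hA2psd : A2.PosSemidef :=
      (posSemidef_smul' (posSemidef_vecMulVec _)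
          (mul_nonneg hε0.le (by linarith))).add
        (posSemidef_smul' (posSemidef_vecMulVec _)
          (mul_nonneg (mul_nonneg ht0 hε0.le) h1e.le))
    have hkey := det_add_ge_trace hBpd hA2psd
    have hBdet : B.det = (1-ε)^q * H.det := by
      rw [hB2, Matrix.det_smul, Fintype.card_fin]
    have hBinv : B⁻¹ = (1-ε)⁻¹ • H⁻¹ := smulMat_inv (by linarith) hu
    have htr : (B⁻¹ * A2).trace = (1-ε)⁻¹ * (ε * (1-t) * a + t * ε * (1-ε) * b) := by
      rw [hBinv, hA2, Matrix.smul_mul, Matrix.trace_smul, Matrix.mul_add, Matrix.trace_add,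
        Matrix.mul_smul, Matrix.mul_smul, Matrix.trace_smul, Matrix.trace_smul,
        trace_mul_vecMulVec, trace_mul_vecMulVec, ← ha, ← hb]
      simp only [smul_eq_mul]
    set F := 1 - ε + ε * ψ - t * ε^2 * b with hF
    clear_value F
    have hBtr : B.det * (1 + (B⁻¹ * A2).trace) = H.det * ((1-ε)^(q-1) * F) := by
      rw [hBdet, htr, hF, hψab]
      have hpow : (1-ε)^q = (1-ε)^(q-1) * (1-ε) := by
        rw [← pow_succ, Nat.sub_add_cancel hq]
      rw [hpow]
      field_simp
      ring
    have hbern : 1 - ((q:ℝ)-1) * ε ≤ (1-ε)^(q-1) := by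
      have h := one_add_mul_le_pow (a := -ε) (by linarith) (q-1)
      have hcast : ((q-1 : ℕ) : ℝ) = (q:ℝ) - 1 := by
        rw [Nat.cast_sub hq, Nat.cast_one]
      rw [hcast] at h
      calc 1 - ((q:ℝ)-1) * ε = 1 + ((q:ℝ)-1) * (-ε) := by ring
        _ ≤ (1 + -ε)^(q-1) := h
        _ = (1-ε)^(q-1) := by ring_nf
    have htb : t * b ≤ C := by
      nlinarith [mul_nonneg (by linarith : (0:ℝ) ≤ (q:ℝ) - 1) (by linarith : (0:ℝ) ≤ ψ - 1)]
    have hεC' : ε * C ≤ (ψ - (q:ℝ))/2 := by linarith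
    have h5 : ε^2 * C ≤ ε * ((ψ - (q:ℝ))/2) := by
      calc ε^2 * C = ε * (ε * C) := by ring
        _ ≤ ε * ((ψ - (q:ℝ))/2) := mul_le_mul_of_nonneg_left hεC' hε0.le
    have htεb : t * ε^2 * b ≤ ε^2 * C := by
      calc t * ε^2 * b = ε^2 * (t * b) := by ring
        _ ≤ ε^2 * C := mul_le_mul_of_nonneg_left htb (sq_nonneg ε)
    have h7 : ε * 1 ≤ ε * (q:ℝ) := mul_le_mul_of_nonneg_left hqR hε0.le
    have h8 : ε * (q:ℝ) ≤ ε * ψ := mul_le_mul_of_nonneg_left hlt.le hε0.le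
    have hF1 : 1 ≤ F := by
      rw [hF]
      linarith only [h5, htεb, h7, h8, hε0]
    have h4 : 0 ≤ ((q:ℝ)-1) * ε * (t * ε^2 * b) :=
      mul_nonneg (mul_nonneg (by linarith) hε0.le)
        (mul_nonneg (mul_nonneg ht0 (sq_nonneg ε)) hb0)
    have h6 : 0 < ε * (ψ - (q:ℝ)) := mul_pos hε0 (by linarith)
    have hstep1 : 1 < (1 - ((q:ℝ)-1) * ε) * F := by
      have hid : (1 - ((q:ℝ)-1) * ε) * F
          = 1 + ε * (ψ - (q:ℝ)) - (t * ε^2 * b + ((q:ℝ)-1) * ε^2 * (ψ-1))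
            + ((q:ℝ)-1) * ε * (t * ε^2 * b) := by
        rw [hF]; ring
      have hCC : t * ε^2 * b + ((q:ℝ)-1) * ε^2 * (ψ-1) = ε^2 * C := by
        rw [hC]; ring
      rw [hid, hCC]
      linarith only [h4, h5, h6]
    have hchain : H.det < (Hmat t x pe).det := by
      calc H.det = H.det * 1 := (mul_one _).symm
        _ < H.det * ((1 - ((q:ℝ)-1) * ε) * F) := (mul_lt_mul_iff_right₀ hdetp).mpr hstep1
        _ ≤ H.det * ((1-ε)^(q-1) * F) := by
            apply mul_le_mul_of_nonneg_left _ hdetp.le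
            exact mul_le_mul_of_nonneg_right hbern (by linarith)
        _ = B.det * (1 + (B⁻¹ * A2).trace) := hBtr.symm
        _ ≤ (B + A2).det := hkey
        _ = (Hmat t x pe).det := by rw [hpert]
    have hue : IsUnit (Hmat t x pe).det := (lt_trans hdetp hchain).ne'.isUnit
    have := hopt pe hpedm hue
    linarith
  · rintro ⟨hu, hψ⟩ p' hp' _
    have hHpd : (Hmat t x p).PosDef :=
      posDef_of_psd_det_ne (Hmat_posSemidef t x p hp ht0 ht1.le) hu.ne_zero
    have hBpsd := Hmat_posSemidef t x p' hp' ht0 ht1.le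
    apply det_le_det_of_trace_le hHpd hBpsd hq
    rw [trace_inv_mul t x p p' hp'.2]
    have h1 : (∑ j, p' j * psiD t x p j) ≤ (q:ℝ) := by
      calc (∑ j, p' j * psiD t x p j) ≤ ∑ j, p' j * q := by
            apply Finset.sum_le_sum
            intro j _
            exact mul_le_mul_of_nonneg_left (hψ j) (hp'.1 j)
        _ = (q:ℝ) := by rw [← Finset.sum_mul, hp'.2, one_mul]
    have h2 : 0 ≤ t * ((gvec x p' - gvec x p) ⬝ᵥ (Hmat t x p)⁻¹ *ᵥ (gvec x p' - gvec x p)) := by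
      apply mul_nonneg ht0
      simpa [star_trivial] using hHpd.inv.posSemidef.dotProduct_mulVec_nonneg (gvec x p' - gvec x p)
    linarith
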